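/- Let p, q, r be pairwise relatively prime positive integers with p < q < r, p odd and p ≥ 3, satisfying pq + pr − qr = 1, and define f(x,y) = −(q+r)x² + 4qxy − 4(q−p)y² − 4y, Δ(y) = 4(2y − (q+r))² − 16(q+r)(p−1), and the lattice 𝔏 = {(a,m) ∈ ℤ² : −p ≤ a ≤ p, a ≡ p (mod 2), 0 ≤ m ≤ (p−1)/2}. Then a point (a,m) ∈ 𝔏 satisfies f(a,m) ≥ f(1,1) if and only if either (a,m) = (1,1), or all of the following hold: m ≥ 2, Δ(m) ≥ 0, and |a − 2qm/(q+r)| ≤ √(Δ(m)) / (2(q+r)). -/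
import Mathlib
set_option maxHeartbeats 1000000


/-- The integer-valued quadratic `f(x,y) = −(q+r)x² + 4qxy − 4(q−p)y² − 4y`. -/
def fZ (p q r a m : ℤ) : ℤ :=
  -(q + r) * a ^ 2 + 4 * q * a * m - 4 * (q - p) * m ^ 2 - 4 * m

/-- The discriminant `Δ(y) = 4(2y − (q+r))² − 16(q+r)(p−1)` as a real function. -/
noncomputable def ΔR (p q r : ℕ) (y : ℝ) : ℝ :=
  4 * (2 * y - ((q : ℝ) + r)) ^ 2 - 16 * ((q : ℝ) + r) * ((p : ℝ) - 1)

/-- The lattice `𝔏 = {(a,m) ∈ ℤ² : −p ≤ a ≤ p, a ≡ p (mod 2), 0 ≤ m ≤ (p−1)/2}`. -/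
def latt (p : ℤ) : Set (ℤ × ℤ) :=
  {am | -p ≤ am.1 ∧ am.1 ≤ p ∧ am.1 % 2 = p % 2 ∧ 0 ≤ am.2 ∧ am.2 ≤ (p - 1) / 2}

/-- Let `p, q, r` be pairwise relatively prime positive integers with
`p < q < r`, `p` odd, `p ≥ 3`, and `pq + pr − qr = 1`. A point `(a,m) ∈ 𝔏` satisfies
`f(a,m) ≥ f(1,1)` if and only if either `(a,m) = (1,1)`, or `m ≥ 2`, `Δ(m) ≥ 0`, and
`|a − 2qm/(q+r)| ≤ √(Δ(m))/(2(q+r))`. -/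
theorem stmt_14 (p q r : ℕ) (hp : 3 ≤ p) (hodd : Odd p) (hpq : p < q) (hqr : q < r)
    (hcopq : Nat.Coprime p q) (hcopr : Nat.Coprime p r) (hcoqr : Nat.Coprime q r)
    (heq : (p : ℤ) * q + (p : ℤ) * r - (q : ℤ) * r = 1) :
    ∀ am : ℤ × ℤ, am ∈ latt p →
      (fZ p q r am.1 am.2 ≥ fZ p q r 1 1 ↔
        (am = (1, 1) ∨
          (2 ≤ am.2 ∧ 0 ≤ ΔR p q r (am.2 : ℝ) ∧
            |(am.1 : ℝ) - 2 * q * (am.2 : ℝ) / ((q : ℝ) + r)| ≤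
              Real.sqrt (ΔR p q r (am.2 : ℝ)) / (2 * ((q : ℝ) + r))))) := by
  intro am ham
  obtain ⟨a, m⟩ := am
  obtain ⟨hL1, hL2, hL3, hL4, hL5⟩ := ham
  simp only [Prod.mk.injEq]
  -- basic facts
  have hpZ : (3:ℤ) ≤ (p:ℕ) := by exact_mod_cast hp
  have hqZ : ((p:ℕ):ℤ) < q := by exact_mod_cast hpq
  have hrZ : ((q:ℕ):ℤ) < r := by exact_mod_cast hqr
  have hpmod : ((p:ℕ):ℤ) % 2 = 1 := by
    obtain ⟨k, hk⟩ := hodd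
    have : ((p:ℕ):ℤ) = 2 * k + 1 := by exact_mod_cast hk
    omega
  have haodd : a % 2 = 1 := by rw [hL3]; exact hpmod
  have hqR : (4:ℝ) ≤ (q:ℝ) := by exact_mod_cast (by omega : 4 ≤ q)
  have hrR : (5:ℝ) ≤ (r:ℝ) := by exact_mod_cast (by omega : 5 ≤ r)
  have hs : (0:ℝ) < (q:ℝ) + r := by linarith
  have h1R : (p:ℝ) * q + (p:ℝ) * r - (q:ℝ) * r = 1 := by exact_mod_cast heq
  set s : ℝ := (q:ℝ) + r with hsdef
  -- the fundamental identity
  have hid : (2 * s * (a:ℝ) - 4 * q * m) ^ 2 - ΔR p q r m =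
      4 * s * (((fZ p q r 1 1 : ℤ) : ℝ) - ((fZ p q r a m : ℤ) : ℝ)) := by
    simp only [fZ, ΔR, hsdef]
    push_cast
    linear_combination (16 * (m:ℝ) ^ 2) * h1R
  -- first equivalence
  have key : fZ p q r a m ≥ fZ p q r 1 1 ↔
      (2 * s * (a:ℝ) - 4 * q * m) ^ 2 ≤ ΔR p q r m := by
    rw [ge_iff_le, ← @Int.cast_le ℝ]
    constructor
    · intro h; nlinarith [hid, hs]
    · intro h; nlinarith [hid, hs]
  -- second equivalence
  have habs : (a:ℝ) - 2 * q * (m:ℝ) / ((q:ℝ) + r) =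
      (2 * s * (a:ℝ) - 4 * q * m) / (2 * s) := by
    rw [hsdef]; field_simp; ring
  have h2s : (0:ℝ) < 2 * s := by linarith
  have key2 : (2 * s * (a:ℝ) - 4 * q * m) ^ 2 ≤ ΔR p q r m ↔
      (0 ≤ ΔR p q r m ∧
        |(a:ℝ) - 2 * q * (m:ℝ) / ((q:ℝ) + r)| ≤ Real.sqrt (ΔR p q r m) / (2 * s)) := by
    constructor
    · intro h
      have hΔ : 0 ≤ ΔR p q r m := le_trans (sq_nonneg _) h
      refine ⟨hΔ, ?_⟩
      have hx : |2 * s * (a:ℝ) - 4 * q * m| ≤ Real.sqrt (ΔR p q r m) := by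
        rw [← Real.sqrt_sq_eq_abs]
        exact Real.sqrt_le_sqrt h
      rw [habs, abs_div, abs_of_pos h2s]
      gcongr
    · rintro ⟨hΔ, hle⟩
      rw [habs, abs_div, abs_of_pos h2s, div_le_div_iff_of_pos_right h2s] at hle
      calc (2 * s * (a:ℝ) - 4 * q * m) ^ 2 = |2 * s * (a:ℝ) - 4 * q * m| ^ 2 := (sq_abs _).symm
        _ ≤ Real.sqrt (ΔR p q r m) ^ 2 := by gcongr
        _ = ΔR p q r m := Real.sq_sqrt hΔ
  constructor
  · intro h
    by_cases h11 : a = 1 ∧ m = 1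
    · exact Or.inl h11
    · refine Or.inr ⟨?_, (key2.mp (key.mp h)).1, by
        have := (key2.mp (key.mp h)).2
        rwa [hsdef] at this⟩
      -- rule out m = 0 and m = 1
      have hm0 : m ≠ 0 := by
        rintro rfl
        simp only [fZ] at h
        have ha1 : 1 ≤ a ^ 2 := by
          have hane : a ≠ 0 := by omega
          nlinarith [sq_abs a, Int.one_le_abs hane]
        have t1 := mul_le_mul_of_nonneg_left ha1 (show (0:ℤ) ≤ (q:ℤ) + r by omega)
        nlinarith [h, t1]
      have hm1 : m ≠ 1 := by
        rintro rfl
        have hane : a ≠ 1 := by tauto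
        simp only [fZ] at h
        rcases (by omega : 3 ≤ a ∨ a ≤ -1) with hc | hc
        · have t0 : (0:ℤ) ≤ ((q:ℤ)+r) * (a+1) - 4*q := by
            have := mul_le_mul_of_nonneg_left (show (4:ℤ) ≤ a + 1 by omega)
              (show (0:ℤ) ≤ (q:ℤ) + r by omega)
            linarith
          have t1 := mul_nonneg (show (0:ℤ) ≤ a - 1 by omega) t0
          nlinarith [h, t1]
        · have t1 := mul_nonneg (mul_nonneg (show (0:ℤ) ≤ (q:ℤ) + r by omega)
            (show (0:ℤ) ≤ -(a+1) by omega)) (show (0:ℤ) ≤ -(a-1) by omega)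
          have t2 := mul_le_mul_of_nonneg_left (show a - 1 ≤ -2 by omega)
            (show (0:ℤ) ≤ 4 * (q:ℤ) by omega)
          nlinarith [h, t1, t2]
      omega
  · rintro (⟨rfl, rfl⟩ | ⟨hm2, hΔ, habsle⟩)
    · exact le_refl _
    · exact key.mpr (key2.mpr ⟨hΔ, by rwa [hsdef]⟩)
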